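/- If two graphs G and H on the same number of edges have equal 1-dimensional measurement varieties M_{1,G} = M_{1,H} ⊆ ℂ^m (under a fixed edge ordering/bijection σ), then σ is a cycle isomorphism: a set of edges of G forms a simple cycle in G if and only if its image under σ forms a simple cycle in H. -/

import Mathlib

/-- A set of edges (given as unordered pairs) is the edge set of a simple cycle of `G`. -/
def IsCycleSet {V : Type*} (G : SimpleGraph V) (E' : Set (Sym2 V)) : Prop :=
  ∃ (v : V) (c : G.Walk v v), c.IsCycle ∧ {e | e ∈ c.edges} = E'


noncomputable section

namespace Stmt13

open MvPolynomial SimpleGraph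

open MvPolynomial




/-- sign of a bool -/
def sgn (b : Bool) : ℂ := if b then -1 else 1

lemma sgn_ne_zero (b : Bool) : sgn b ≠ 0 := by cases b <;> simp [sgn]

lemma sgn_mul_self (b : Bool) : sgn b * sgn b = 1 := by cases b <;> simp [sgn]

lemma sgn_not (b : Bool) : sgn (!b) = - sgn b := by cases b <;> simp [sgn]

variable {k : ℕ}

/-- linear form with signs -/
def L (ε : Fin k → Bool) : MvPolynomial (Fin k) ℂ :=
  ∑ i, C (sgn (ε i)) * X i

def P (k : ℕ) : MvPolynomial (Fin k) ℂ := ∏ ε : Fin k → Bool, L ε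

lemma L_ne_zero (hk : 0 < k) (ε : Fin k → Bool) : L ε ≠ 0 := by
  intro h
  have h2 := congrArg (eval (fun i => sgn (ε i))) h
  simp only [L, map_sum, map_mul, eval_C, eval_X, map_zero, sgn_mul_self,
    Finset.sum_const, Finset.card_univ, Fintype.card_fin, nsmul_eq_mul, mul_one] at h2
  exact (Nat.cast_ne_zero.2 hk.ne').elim (by exact_mod_cast h2)

lemma P_ne_zero (hk : 0 < k) : P k ≠ 0 := by
  rw [P, Finset.prod_ne_zero_iff]
  exact fun ε _ => L_ne_zero hk ε

def flip (j : Fin k) : MvPolynomial (Fin k) ℂ →ₐ[ℂ] MvPolynomial (Fin k) ℂ :=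
  bind₁ (fun i => if i = j then -X i else X i)

lemma flip_L (j : Fin k) (ε : Fin k → Bool) :
    flip j (L ε) = L (Function.update ε j (!ε j)) := by
  simp only [flip, L, map_sum, map_mul, bind₁_C_right, bind₁_X_right]
  refine Finset.sum_congr rfl fun i _ => ?_
  by_cases h : i = j
  · subst h
    simp only [Function.update_self, sgn_not, map_neg, if_true]
    ring
  · simp [Function.update_of_ne h, if_neg h]

lemma flip_P (j : Fin k) : flip j (P k) = P k := by
  have hinv : Function.Involutive (fun ε : Fin k → Bool => Function.update ε j (!ε j)) := by
    intro ε
    funext i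
    by_cases h : i = j
    · subst h; simp
    · simp [Function.update_of_ne h]
  calc flip j (P k) = ∏ ε : Fin k → Bool, L (Function.update ε j (!ε j)) := by
        simp only [P, map_prod, flip_L]
    _ = P k := by
        rw [P]
        exact Fintype.prod_equiv hinv.toPerm (fun ε => L (Function.update ε j (!ε j)))
          (fun ε => L ε) (fun ε => rfl)





lemma flip_monomial (j : Fin k) (d : Fin k →₀ ℕ) (c : ℂ) :
    flip j (monomial d c) = monomial d ((-1 : ℂ) ^ (d j) * c) := by
  rw [flip, bind₁_monomial]
  have key : ∀ i ∈ d.support,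
      (if i = j then -X i else X i) ^ d i
        = ((-1 : MvPolynomial (Fin k) ℂ) ^ (if i = j then d i else 0)) * X i ^ d i := by
    intro i _
    by_cases h : i = j
    · subst h
      rw [if_pos rfl, if_pos rfl, neg_pow]
    · rw [if_neg h, if_neg h, pow_zero, one_mul]
  rw [Finset.prod_congr rfl key, Finset.prod_mul_distrib, Finset.prod_pow_eq_pow_sum]
  have hsum : (∑ i ∈ d.support, if i = j then d i else 0) = d j := by
    rw [Finset.sum_ite_eq' d.support j d]
    by_cases h : j ∈ d.support
    · rw [if_pos h]
    · rw [if_neg h, eq_comm]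
      exact Finsupp.notMem_support_iff.1 h
  have hC : ((-1 : MvPolynomial (Fin k) ℂ) ^ d j) = C ((-1 : ℂ) ^ d j) := by
    rw [map_pow, map_neg, map_one]
  rw [hsum, monomial_eq, map_mul, hC, Finsupp.prod]
  ring

lemma coeff_flip (j : Fin k) (f : MvPolynomial (Fin k) ℂ) (d : Fin k →₀ ℕ) :
    coeff d (flip j f) = (-1 : ℂ) ^ (d j) * coeff d f := by
  conv_lhs => rw [← support_sum_monomial_coeff f]
  rw [map_sum, coeff_sum]
  simp only [flip_monomial, coeff_monomial]
  rw [Finset.sum_ite_eq' f.support d]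
  by_cases h : d ∈ f.support
  · rw [if_pos h]
  · rw [if_neg h, MvPolynomial.notMem_support_iff.1 h, mul_zero]

lemma even_of_mem_support {d : Fin k →₀ ℕ} (hd : d ∈ (P k).support) (j : Fin k) :
    Even (d j) := by
  have h1 : coeff d (P k) ≠ 0 := MvPolynomial.mem_support_iff.1 hd
  have h2 : coeff d (P k) = (-1 : ℂ) ^ (d j) * coeff d (P k) := by
    conv_lhs => rw [← flip_P j, coeff_flip]
  have h3 : ((-1 : ℂ) ^ (d j)) = 1 := by
    have h2' : (-1 : ℂ) ^ (d j) * coeff d (P k) = 1 * coeff d (P k) := by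
      rw [one_mul]; exact h2.symm
    exact mul_right_cancel₀ h1 h2'
  exact (neg_one_pow_eq_one_iff_even (by norm_num : (-1 : ℂ) ≠ 1)).1 h3

def Q (k : ℕ) : MvPolynomial (Fin k) ℂ :=
  ∑ d ∈ (P k).support, monomial (Finsupp.mapRange (· / 2) (Nat.zero_div 2) d) (coeff d (P k))

lemma bind_Q : bind₁ (fun i => (X i : MvPolynomial (Fin k) ℂ) ^ 2) (Q k) = P k := by
  rw [Q, map_sum]
  conv_rhs => rw [← support_sum_monomial_coeff (P k)]
  refine Finset.sum_congr rfl fun d hd => ?_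
  rw [bind₁_monomial, monomial_eq]
  congr 1
  have hsub := Finsupp.support_mapRange (f := (· / 2)) (hf := Nat.zero_div 2) (g := d)
  rw [Finset.prod_subset hsub ?h1]
  · refine Finset.prod_congr rfl fun i hi => ?_
    rw [Finsupp.mapRange_apply, ← pow_mul, Nat.two_mul_div_two_of_even (even_of_mem_support hd i)]
  · intro i _ hi
    rw [Finsupp.notMem_support_iff.1 hi, pow_zero]

lemma Q_ne_zero (hk : 0 < k) : Q k ≠ 0 := by
  intro h
  exact P_ne_zero hk (by rw [← bind_Q, h, map_zero])

lemma eval_sq_Q (z : Fin k → ℂ) (hz : ∑ i, z i = 0) :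
    eval (fun i => z i ^ 2) (Q k) = 0 := by
  have h1 : eval z (P k) = 0 := by
    have h0 : eval z (L (fun _ => false : Fin k → Bool)) = 0 := by
      simp [L, sgn, hz]
    rw [P, map_prod]
    exact Finset.prod_eq_zero (Finset.mem_univ _) h0
  have h2 : eval z (bind₁ (fun i => (X i : MvPolynomial (Fin k) ℂ) ^ 2) (Q k))
      = eval (fun i => z i ^ 2) (Q k) := by
    rw [hom_bind₁]
    have : ((eval z : MvPolynomial (Fin k) ℂ →+* ℂ).comp C) = RingHom.id ℂ := by
      ext r; simp
    simp only [this]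
    rw [show (fun i => eval z ((X i : MvPolynomial (Fin k) ℂ) ^ 2)) = fun i => z i ^ 2 from
      funext fun i => by rw [map_pow, eval_X]]
    rfl
  rw [← h2, bind_Q, h1]






open SimpleGraph

variable {V : Type*} {G : SimpleGraph V}

lemma telescope {u v : V} (w : G.Walk u v) (p : V → ℂ) :
    (w.darts.map fun d => p d.toProd.1 - p d.toProd.2).sum = p u - p v := by
  induction w with
  | nil => simp
  | cons h q ih => rw [SimpleGraph.Walk.darts_cons, List.map_cons, List.sum_cons, ih]; ring

lemma last_edge {w v : V} (q : G.Walk w v) (hq : q.IsPath) {x : V}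
    (hx : s(x, v) ∈ q.edges) :
    ∃ (q' : G.Walk w x) (h : G.Adj x v), q = q'.concat h := by
  induction q with
  | nil => simp at hx
  | @cons w w' v h' r ih =>
    rw [SimpleGraph.Walk.cons_isPath_iff] at hq
    rw [SimpleGraph.Walk.edges_cons, List.mem_cons] at hx
    rcases hx with hcase | hcase
    · rcases Sym2.eq_iff.1 hcase with ⟨rfl, rfl⟩ | ⟨rfl, rfl⟩
      · -- x = w, v = w' : r is a path from v to v hence nil
        have : r = SimpleGraph.Walk.nil := SimpleGraph.Walk.isPath_iff_eq_nil.1 hq.1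
        subst this
        exact ⟨SimpleGraph.Walk.nil, h', by rw [SimpleGraph.Walk.concat_nil]⟩
      · -- x = w', v = w : contradiction with w ∉ r.support
        exact absurd r.end_mem_support hq.2
    · obtain ⟨q', hadj, rfl⟩ := ih hq.1 hcase
      exact ⟨SimpleGraph.Walk.cons h' q', hadj, by rw [SimpleGraph.Walk.concat_cons]⟩

lemma concat_isPath_parts {a b c : V} {p' : G.Walk a b} {h2 : G.Adj b c}
    (hp : (p'.concat h2).IsPath) : p'.IsPath ∧ c ∉ p'.support := by
  have hrev : (p'.concat h2).reverse.IsPath := (SimpleGraph.Walk.isPath_reverse_iff _).2 hp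
  rw [SimpleGraph.Walk.reverse_concat, SimpleGraph.Walk.cons_isPath_iff] at hrev
  refine ⟨(SimpleGraph.Walk.isPath_reverse_iff _).1 hrev.1, ?_⟩
  intro hc
  exact hrev.2 (by rwa [SimpleGraph.Walk.support_reverse, List.mem_reverse])

lemma cycle_sub_edge {v x y : V} {c : G.Walk v v} (hc : c.IsCycle)
    (he0 : s(x, y) ∈ c.edges) :
    ∃ (a b : V) (q : G.Walk a b), q.IsPath ∧ ∀ e ∈ c.edges, e ≠ s(x, y) → e ∈ q.edges := by
  classical
  have hx : x ∈ c.support := c.fst_mem_support_of_mem_edges he0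
  set c' := c.rotate x hx with hc'def
  have hc' : c'.IsCycle := hc.rotate hx
  have hedges : ∀ e, e ∈ c'.edges ↔ e ∈ c.edges := fun e => (c.rotate_edges x hx).mem_iff
  have he0' : s(x, y) ∈ c'.edges := (hedges _).2 he0
  clear_value c'
  cases c' with
  | nil => exact absurd rfl hc'.ne_nil
  | @cons _ w' _ h1 p =>
    obtain ⟨hp, hfe⟩ := (SimpleGraph.Walk.cons_isCycle_iff p h1).1 hc'
    by_cases hA : s(x, y) = s(x, w')
    · refine ⟨w', x, p, hp, fun e he hene => ?_⟩
      have := (hedges e).2 he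
      rw [SimpleGraph.Walk.edges_cons, List.mem_cons] at this
      rcases this with h | h
      · exact absurd (h.trans hA.symm) hene
      · exact h
    · have hyp : s(y, x) ∈ p.edges := by
        have := he0'
        rw [SimpleGraph.Walk.edges_cons, List.mem_cons] at this
        rcases this with h | h
        · exact absurd h hA
        · rwa [Sym2.eq_swap] at h
      obtain ⟨p', h2, rfl⟩ := last_edge p hp hyp
      obtain ⟨hp', hxp'⟩ := concat_isPath_parts hp
      refine ⟨x, y, SimpleGraph.Walk.cons h1 p', ?_, fun e he hene => ?_⟩
      · rw [SimpleGraph.Walk.cons_isPath_iff]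
        exact ⟨hp', hxp'⟩
      · have := (hedges e).2 he
        rw [SimpleGraph.Walk.edges_cons, List.mem_cons] at this
        rcases this with h | h
        · rw [SimpleGraph.Walk.edges_cons, List.mem_cons]; exact Or.inl h
        · rw [SimpleGraph.Walk.edges_concat, List.concat_eq_append, List.mem_append,
            List.mem_singleton] at h
          rcases h with h | h
          · rw [SimpleGraph.Walk.edges_cons, List.mem_cons]; exact Or.inr h
          · rw [h] at hene
            exact absurd (Sym2.eq_swap) hene

lemma realize_path : ∀ {u v : V} (q : G.Walk u v), q.IsPath → ∀ (w : Sym2 V → ℂ),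
    ∃ p : V → ℂ, ∀ a b : V, s(a, b) ∈ q.edges → (p a - p b) ^ 2 = w s(a, b) := by
  intro u v q
  induction q with
  | nil => exact fun _ w => ⟨0, by simp⟩
  | @cons u u' v h r ih =>
    intro hq w
    classical
    rw [SimpleGraph.Walk.cons_isPath_iff] at hq
    obtain ⟨p, hp⟩ := ih hq.1 w
    obtain ⟨z, hz⟩ : ∃ z : ℂ, z ^ 2 = w s(u, u') :=
      IsAlgClosed.exists_pow_nat_eq (w s(u, u')) (by norm_num : 0 < 2)
    have hne : u ≠ u' := G.ne_of_adj h
    refine ⟨Function.update p u (p u' + z), fun a b hab => ?_⟩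
    rw [SimpleGraph.Walk.edges_cons, List.mem_cons] at hab
    have key : (Function.update p u (p u' + z) u - Function.update p u (p u' + z) u') ^ 2
        = w s(u, u') := by
      rw [Function.update_self, Function.update_of_ne hne.symm]
      rw [show p u' + z - p u' = z by ring, hz]
    rcases hab with hab | hab
    · rcases Sym2.eq_iff.1 hab with ⟨rfl, rfl⟩ | ⟨rfl, rfl⟩
      · exact key
      · rw [Sym2.eq_swap]
        linear_combination key
    · have ha : a ∈ r.support := r.fst_mem_support_of_mem_edges hab
      have hb : b ∈ r.support := r.snd_mem_support_of_mem_edges hab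
      rw [Function.update_of_ne (show a ≠ u from fun h' => hq.2 (h' ▸ ha)),
        Function.update_of_ne (show b ≠ u from fun h' => hq.2 (h' ▸ hb))]
      exact hp a b hab

lemma concat_isPath {a b c : V} {p : G.Walk a b} (h : G.Adj b c)
    (hp : p.IsPath) (hc : c ∉ p.support) : (p.concat h).IsPath := by
  rw [← SimpleGraph.Walk.isPath_reverse_iff, SimpleGraph.Walk.reverse_concat,
    SimpleGraph.Walk.cons_isPath_iff]
  refine ⟨(SimpleGraph.Walk.isPath_reverse_iff _).2 hp, ?_⟩
  rwa [SimpleGraph.Walk.support_reverse, List.mem_reverse]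

lemma exists_leaf [Fintype V] (E' : Set (Sym2 V)) (hE : E' ⊆ G.edgeSet)
    (hnc : ¬ ∃ (v : V) (c : G.Walk v v), c.IsCycle ∧ ∀ e ∈ c.edges, e ∈ E')
    (hne : E'.Nonempty) :
    ∃ x y : V, s(x, y) ∈ E' ∧ ∀ e ∈ E', y ∈ e → e = s(x, y) := by
  classical
  set G' := SimpleGraph.fromEdgeSet E' with hG'
  have hle : G' ≤ G := by
    rw [hG', ← SimpleGraph.fromEdgeSet_edgeSet (G := G)]
    exact SimpleGraph.fromEdgeSet_mono hE
  have hedge' : ∀ e ∈ G'.edgeSet, e ∈ E' := by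
    intro e he
    rw [hG', SimpleGraph.edgeSet_fromEdgeSet] at he
    exact he.1
  have hnc' : ∀ (v : V) (c : G'.Walk v v), ¬c.IsCycle := by
    intro v c hcyc
    apply hnc
    refine ⟨v, c.mapLe hle, hcyc.mapLe hle, fun e he => ?_⟩
    simp only [SimpleGraph.Walk.mapLe, SimpleGraph.Walk.edges_map, List.mem_map,
      SimpleGraph.Hom.coe_ofLE] at he
    obtain ⟨e', he', rfl⟩ := he
    rw [Sym2.map_id]
    exact hedge' e' (c.edges_subset_edgeSet he')
  -- the set of lengths of paths in G'
  set S : Set ℕ := {k : ℕ | ∃ (a b : V) (q : G'.Walk a b), q.IsPath ∧ q.length = k} with hS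
  have hbdd : BddAbove S := by
    refine ⟨Fintype.card V, fun k hk => ?_⟩
    obtain ⟨a, b, q, hq, rfl⟩ := hk
    have := hq.support_nodup.length_le_card
    rw [SimpleGraph.Walk.length_support] at this
    omega
  have hone : 1 ∈ S := by
    obtain ⟨e, he⟩ := hne
    have hee := hE he
    revert he hee
    induction e using Sym2.ind with | _ a0 b0 =>
    intro he hee
    rw [SimpleGraph.mem_edgeSet] at hee
    have hadj : G'.Adj a0 b0 := by
      rw [hG', SimpleGraph.fromEdgeSet_adj]
      exact ⟨he, hee.ne⟩
    exact ⟨a0, b0, SimpleGraph.Walk.cons hadj SimpleGraph.Walk.nil, by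
      rw [SimpleGraph.Walk.cons_isPath_iff]
      refine ⟨SimpleGraph.Walk.IsPath.nil, ?_⟩
      simp only [SimpleGraph.Walk.support_nil, List.mem_singleton]
      exact fun h => hee.ne h, rfl⟩
  have hSne : S.Nonempty := ⟨1, hone⟩
  obtain ⟨a, b, q, hq, hlen⟩ := Nat.sSup_mem hSne hbdd
  have hlpos : 1 ≤ q.length := by
    rw [hlen]
    exact le_csSup hbdd hone
  have hqnil : ¬ q.reverse.Nil := by
    rw [SimpleGraph.Walk.not_nil_iff_lt_length, SimpleGraph.Walk.length_reverse]
    omega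
  obtain ⟨y0, hadj, r, hrev⟩ := SimpleGraph.Walk.not_nil_iff.1 hqnil
  have hq_eq : q = r.reverse.concat hadj.symm := by
    have := congrArg SimpleGraph.Walk.reverse hrev
    rwa [SimpleGraph.Walk.reverse_reverse, SimpleGraph.Walk.reverse_cons] at this
  -- every G'-neighbor of b equals y0
  have huniq : ∀ w : V, G'.Adj b w → w = y0 := by
    intro w hw
    by_cases hmem : s(w, b) ∈ q.edges
    · obtain ⟨q'', hwb, hq2⟩ := last_edge q hq hmem
      rw [hq_eq] at hq2
      obtain ⟨hv, -⟩ := SimpleGraph.Walk.concat_inj hq2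
      exact hv.symm
    · by_cases hws : w ∈ q.support
      · have hr2 : (q.dropUntil w hws).IsPath := hq.dropUntil hws
        have hcyc : (SimpleGraph.Walk.cons hw (q.dropUntil w hws)).IsCycle := by
          rw [SimpleGraph.Walk.cons_isCycle_iff]
          refine ⟨hr2, fun hbw => ?_⟩
          exact hmem (by
            have := SimpleGraph.Walk.edges_dropUntil_subset q hws hbw
            rwa [Sym2.eq_swap] at this)
        exact absurd hcyc (hnc' b _)
      · have hext : (q.concat hw).IsPath := concat_isPath hw hq hws
        have : q.length + 1 ∈ S := ⟨a, w, q.concat hw, hext, SimpleGraph.Walk.length_concat _ _⟩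
        have hle' := le_csSup hbdd this
        rw [hlen] at hle'
        omega
  refine ⟨y0, b, ?_, ?_⟩
  · -- the last edge of q is in E'
    have : s(y0, b) ∈ q.edges := by
      rw [hq_eq, SimpleGraph.Walk.edges_concat, List.concat_eq_append, List.mem_append]
      exact Or.inr (by simp)
    exact hedge' _ (q.edges_subset_edgeSet this)
  · intro e he hbe
    obtain ⟨w, rfl⟩ := Sym2.mem_iff_exists.1 hbe
    have hbw : b ≠ w := by
      have := hE he
      rw [SimpleGraph.mem_edgeSet] at this
      exact this.ne
    have hadj' : G'.Adj b w := by
      rw [hG', SimpleGraph.fromEdgeSet_adj]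
      exact ⟨he, hbw⟩
    rw [huniq w hadj', Sym2.eq_swap]

lemma realize_forest [Fintype V] :
    ∀ (N : ℕ) (E' : Finset (Sym2 V)), E'.card ≤ N → (↑E' ⊆ G.edgeSet) →
    (¬ ∃ (v : V) (c : G.Walk v v), c.IsCycle ∧ ∀ e ∈ c.edges, e ∈ E') →
    ∀ (w : Sym2 V → ℂ),
    ∃ p : V → ℂ, ∀ a b : V, s(a, b) ∈ E' → (p a - p b) ^ 2 = w s(a, b) := by
  intro N
  induction N with
  | zero =>
    intro E' hcard _ _ w
    refine ⟨0, fun a b hab => ?_⟩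
    rw [Finset.card_eq_zero.1 (Nat.le_zero.1 hcard)] at hab
    simp at hab
  | succ N ih =>
    intro E' hcard hE hnc w
    classical
    rcases E'.eq_empty_or_nonempty with rfl | hne
    · exact ⟨0, fun a b hab => by simp at hab⟩
    · obtain ⟨x, y, hxy, hleaf⟩ := exists_leaf (↑E' : Set (Sym2 V)) hE
        (fun ⟨v, c, hc, hsub⟩ => hnc ⟨v, c, hc, fun e he => hsub e he⟩) hne
      have hxyadj : G.Adj x y := (G.mem_edgeSet).1 (hE hxy)
      obtain ⟨p, hp⟩ := ih (E'.erase s(x, y))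
        (by
          have := Finset.card_erase_lt_of_mem hxy
          omega)
        (fun e he => hE (Finset.erase_subset _ _ he))
        (fun ⟨v, c, hc, hsub⟩ => hnc ⟨v, c, hc, fun e he => Finset.erase_subset _ _ (hsub e he)⟩)
        w
      obtain ⟨z, hz⟩ : ∃ z : ℂ, z ^ 2 = w s(x, y) :=
        IsAlgClosed.exists_pow_nat_eq (w s(x, y)) (by norm_num : 0 < 2)
      have keyf : (Function.update p y (p x + z) x - Function.update p y (p x + z) y) ^ 2
          = w s(x, y) := by
        rw [Function.update_self, Function.update_of_ne hxyadj.ne]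
        rw [show p x - (p x + z) = -z by ring, ← hz]
        ring
      refine ⟨Function.update p y (p x + z), fun a b hab => ?_⟩
      by_cases hcase : s(a, b) = s(x, y)
      · rcases Sym2.eq_iff.1 hcase with ⟨rfl, rfl⟩ | ⟨rfl, rfl⟩
        · exact keyf
        · rw [Sym2.eq_swap]
          linear_combination keyf
      · have hya : a ≠ y := by
          intro h'
          subst h'
          exact hcase ((hleaf s(a, b) hab (by simp)).trans rfl)
        have hyb : b ≠ y := by
          intro h'
          subst h'
          exact hcase (hleaf s(a, b) hab (by simp))
        rw [Function.update_of_ne hya, Function.update_of_ne hyb]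
        exact hp a b (Finset.mem_erase.2 ⟨hcase, hab⟩)






open MvPolynomial SimpleGraph

variable {V : Type*} {G : SimpleGraph V}

lemma sq_diff_eq {a b x y : V} (p : V → ℂ) (h : s(a, b) = s(x, y)) :
    (p a - p b) ^ 2 = (p x - p y) ^ 2 := by
  rcases Sym2.eq_iff.1 h with ⟨rfl, rfl⟩ | ⟨rfl, rfl⟩
  · rfl
  · ring

lemma edges_get {u v : V} (w : G.Walk u v) :
    ∀ (i : ℕ) (hi : i < w.length),
      w.edges.get ⟨i, by rw [SimpleGraph.Walk.length_edges]; exact hi⟩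
        = s(w.getVert i, w.getVert (i + 1)) := by
  induction w with
  | nil => intro i hi; simp at hi
  | @cons u u' v h r ih =>
    intro i hi
    match i with
    | 0 =>
      simp [SimpleGraph.Walk.edges_cons, SimpleGraph.Walk.getVert_zero,
        SimpleGraph.Walk.getVert_cons_succ]
    | (j + 1) =>
      have hj : j < r.length := by
        rw [SimpleGraph.Walk.length_cons] at hi
        omega
      have := ih j hj
      simp only [SimpleGraph.Walk.edges_cons, SimpleGraph.Walk.getVert_cons_succ]
      exact this






open MvPolynomial SimpleGraph

def Dep {m : ℕ} (I : Ideal (MvPolynomial (Fin m) ℂ)) (t : Set (Fin m)) : Prop :=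
  ∃ f ∈ I, f ≠ 0 ∧ ↑f.vars ⊆ t

lemma vi_zl_vi {m : ℕ} (S : Set (Fin m → ℂ)) :
    vanishingIdeal ℂ (zeroLocus ℂ (vanishingIdeal ℂ S)) = vanishingIdeal ℂ S := by
  apply le_antisymm
  · intro f hf
    rw [mem_vanishingIdeal_iff] at hf ⊢
    exact fun x hx => hf x (zeroLocus_vanishingIdeal_le S hx)
  · exact le_vanishingIdeal_zeroLocus _

lemma dep_of_cycle {n m : ℕ} {G : SimpleGraph (Fin n)} (eE : Fin m → Fin n × Fin n)
    {v : Fin n} {c : G.Walk v v} (hc : c.IsCycle) (T : Set (Fin m))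
    (hcov : ∀ e ∈ c.edges, ∃ a ∈ T, s((eE a).1, (eE a).2) = e) :
    Dep (vanishingIdeal ℂ (Set.range
      (fun p : Fin n → ℂ => fun a : Fin m => (p (eE a).1 - p (eE a).2) ^ 2))) T := by
  classical
  have hkpos : 0 < c.length := by have := hc.three_le_length; omega
  have hedge : ∀ i : Fin c.length, s(c.getVert i.val, c.getVert (i.val + 1)) ∈ c.edges := by
    intro i
    rw [← edges_get c i.val i.2]
    exact List.get_mem _ _
  choose φ hφT hφe using fun i : Fin c.length => hcov _ (hedge i)
  have hφinj : Function.Injective φ := by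
    intro i j hij
    have heq : s(c.getVert i.val, c.getVert (i.val + 1))
        = s(c.getVert j.val, c.getVert (j.val + 1)) := by
      rw [← hφe i, ← hφe j, hij]
    rw [← edges_get c i.val i.2, ← edges_get c j.val j.2] at heq
    have hnd : c.edges.Nodup := ((SimpleGraph.Walk.isCycle_def c).1 hc).1.edges_nodup
    have := (hnd.get_inj_iff).1 heq
    exact Fin.ext (congrArg Fin.val this : _)
  refine ⟨rename φ (Q c.length), ?_, ?_, ?_⟩
  · rw [mem_vanishingIdeal_iff]
    rintro x ⟨p, rfl⟩
    rw [aeval_eq_eval, eval_rename]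
    have hcomp : ((fun a : Fin m => (p (eE a).1 - p (eE a).2) ^ 2) ∘ φ)
        = fun i : Fin c.length => (p (c.getVert i.val) - p (c.getVert (i.val + 1))) ^ 2 := by
      funext i
      exact sq_diff_eq p (hφe i)
    rw [hcomp]
    apply eval_sq_Q
    have : ∑ i : Fin c.length, (p (c.getVert i.val) - p (c.getVert (i.val + 1)))
        = ∑ i ∈ Finset.range c.length, (p (c.getVert i) - p (c.getVert (i + 1))) :=
      Fin.sum_univ_eq_sum_range (fun i => p (c.getVert i) - p (c.getVert (i + 1))) c.length
    rw [this, Finset.sum_range_sub' (fun i => p (c.getVert i)),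
      SimpleGraph.Walk.getVert_zero, SimpleGraph.Walk.getVert_length, sub_self]
  · intro h0
    exact Q_ne_zero hkpos (rename_injective φ hφinj (by rw [h0, map_zero]))
  · intro a ha
    simp only [Finset.mem_coe] at ha
    have := vars_rename φ (Q c.length) ha
    rw [Finset.mem_image] at this
    obtain ⟨i, -, rfl⟩ := this
    exact hφT i

lemma nodep {n m : ℕ} (eE : Fin m → Fin n × Fin n) (t : Set (Fin m))
    (hreal : ∀ x : Fin m → ℂ, ∃ p : Fin n → ℂ, ∀ a ∈ t, (p (eE a).1 - p (eE a).2) ^ 2 = x a) :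
    ¬ Dep (vanishingIdeal ℂ (Set.range
      (fun p : Fin n → ℂ => fun a : Fin m => (p (eE a).1 - p (eE a).2) ^ 2))) t := by
  rintro ⟨f, hfI, hf0, hfv⟩
  apply hf0
  have hsup : f ∈ supported ℂ t := mem_supported.2 hfv
  rw [supported_eq_range_rename, AlgHom.mem_range] at hsup
  obtain ⟨g, rfl⟩ := hsup
  apply MvPolynomial.funext
  intro x
  rw [map_zero]
  obtain ⟨p, hp⟩ := hreal x
  rw [mem_vanishingIdeal_iff] at hfI
  have h2 := hfI _ ⟨p, rfl⟩
  rw [aeval_eq_eval] at h2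
  rw [eval_rename] at h2 ⊢
  have : (x ∘ (Subtype.val : t → Fin m))
      = ((fun a : Fin m => (p (eE a).1 - p (eE a).2) ^ 2) ∘ Subtype.val) := by
    funext i
    exact (hp i.val i.2).symm
  rw [this]
  exact h2





open MvPolynomial SimpleGraph

lemma key_dir {n m : ℕ} (G H : SimpleGraph (Fin n))
    (eG eH : Fin m → Fin n × Fin n)
    (hGadj : ∀ a, G.Adj (eG a).1 (eG a).2)
    (hHadj : ∀ a, H.Adj (eH a).1 (eH a).2)
    (hGinj : Function.Injective (fun a => s((eG a).1, (eG a).2)))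
    (hHinj : Function.Injective (fun a => s((eH a).1, (eH a).2)))
    (hI : vanishingIdeal ℂ
        (Set.range (fun p : Fin n → ℂ => fun a : Fin m => (p (eG a).1 - p (eG a).2) ^ 2))
      = vanishingIdeal ℂ
        (Set.range (fun p : Fin n → ℂ => fun a : Fin m => (p (eH a).1 - p (eH a).2) ^ 2)))
    (s : Set (Fin m))
    (hcyc : IsCycleSet G ((fun a => s((eG a).1, (eG a).2)) '' s)) :
    IsCycleSet H ((fun a => s((eH a).1, (eH a).2)) '' s) := by
  classical
  obtain ⟨v, c, hc, hset⟩ := hcyc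
  set IG := vanishingIdeal ℂ
    (Set.range (fun p : Fin n → ℂ => fun a : Fin m => (p (eG a).1 - p (eG a).2) ^ 2)) with hIG
  set IH := vanishingIdeal ℂ
    (Set.range (fun p : Fin n → ℂ => fun a : Fin m => (p (eH a).1 - p (eH a).2) ^ 2)) with hIH
  -- membership transfer
  have hmemc : ∀ a ∈ s, s((eG a).1, (eG a).2) ∈ c.edges := by
    intro a ha
    have : s((eG a).1, (eG a).2) ∈ (fun a => s((eG a).1, (eG a).2)) '' s := ⟨a, ha, rfl⟩
    rw [← hset] at this
    exact this
  have hcov : ∀ e ∈ c.edges, ∃ a ∈ s, s((eG a).1, (eG a).2) = e := by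
    intro e he
    have : e ∈ (fun a => s((eG a).1, (eG a).2)) '' s := by rw [← hset]; exact he
    obtain ⟨a, ha, rfl⟩ := this
    exact ⟨a, ha, rfl⟩
  -- Step 1 : s is dependent
  have hdep : Dep IG s := dep_of_cycle eG hc s hcov
  -- Step 2 : proper subsets are independent
  have hmin : ∀ t : Set (Fin m), t ⊂ s → ¬ Dep IG t := by
    intro t hts
    obtain ⟨a0, ha0s, ha0t⟩ := Set.exists_of_ssubset hts
    have he0 : s((eG a0).1, (eG a0).2) ∈ c.edges := hmemc a0 ha0s
    obtain ⟨α, β, q, hq, hqcov⟩ := cycle_sub_edge hc he0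
    rw [hIG]
    apply nodep eG t
    intro x
    set w : Sym2 (Fin n) → ℂ := fun e =>
      if h : ∃ a, a ∈ t ∧ s((eG a).1, (eG a).2) = e then x h.choose else 0 with hw
    obtain ⟨p, hp⟩ := realize_path q hq w
    refine ⟨p, fun a ha => ?_⟩
    have hane : s((eG a).1, (eG a).2) ≠ s((eG a0).1, (eG a0).2) := by
      intro hcontr
      exact ha0t ((hGinj hcontr) ▸ ha)
    have hmem : s((eG a).1, (eG a).2) ∈ q.edges :=
      hqcov _ (hmemc a (hts.1 ha)) hane
    rw [hp (eG a).1 (eG a).2 hmem]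
    have hex : ∃ a', a' ∈ t ∧ s((eG a').1, (eG a').2) = s((eG a).1, (eG a).2) := ⟨a, ha, rfl⟩
    rw [hw]
    simp only
    rw [dif_pos hex]
    exact congrArg x (hGinj hex.choose_spec.2)
  -- transfer to H
  rw [hI] at hdep
  have hminH : ∀ t : Set (Fin m), t ⊂ s → ¬ Dep IH t := by
    intro t ht
    rw [← hI]
    exact hmin t ht
  -- Step 3 : extract a cycle of H inside the image
  have hcyc' : ∃ (v' : Fin n) (c' : H.Walk v' v'), c'.IsCycle ∧
      ∀ e ∈ c'.edges, e ∈ (fun a => s((eH a).1, (eH a).2)) '' s := by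
    by_contra hnic
    refine (nodep eH s ?_) (hIH ▸ hdep)
    intro x
    set E' : Finset (Sym2 (Fin n)) :=
      (Set.Finite.image _ (Set.toFinite s)).toFinset with hE'
    have hE'mem : ∀ e, e ∈ E' ↔ e ∈ (fun a => s((eH a).1, (eH a).2)) '' s := by
      intro e
      rw [hE', Set.Finite.mem_toFinset]
    set w : Sym2 (Fin n) → ℂ := fun e =>
      if h : ∃ a, a ∈ s ∧ s((eH a).1, (eH a).2) = e then x h.choose else 0 with hw
    obtain ⟨p, hp⟩ := realize_forest (G := H) E'.card E' le_rfl
      (by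
        intro e he
        rw [Finset.mem_coe, hE'mem] at he
        obtain ⟨a, -, rfl⟩ := he
        exact (H.mem_edgeSet).2 (hHadj a))
      (by
        intro ⟨v', c', hc', hsub⟩
        exact hnic ⟨v', c', hc', fun e he => (hE'mem e).1 (hsub e he)⟩)
      w
    refine ⟨p, fun a ha => ?_⟩
    have hmem : s((eH a).1, (eH a).2) ∈ E' := (hE'mem _).2 ⟨a, ha, rfl⟩
    rw [hp (eH a).1 (eH a).2 hmem]
    have hex : ∃ a', a' ∈ s ∧ s((eH a').1, (eH a').2) = s((eH a).1, (eH a).2) := ⟨a, ha, rfl⟩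
    rw [hw]
    simp only
    rw [dif_pos hex]
    exact congrArg x (hHinj hex.choose_spec.2)
  obtain ⟨v', c', hc', hsub⟩ := hcyc'
  set t' : Set (Fin m) := {a | a ∈ s ∧ s((eH a).1, (eH a).2) ∈ c'.edges} with ht'
  have ht's : t' ⊆ s := fun a ha => ha.1
  have hdept' : Dep IH t' := by
    apply dep_of_cycle eH hc' t'
    intro e he
    obtain ⟨a, ha, rfl⟩ := hsub e he
    exact ⟨a, ⟨ha, he⟩, rfl⟩
  have ht'eq : t' = s := by
    by_contra hne
    exact hminH t' (Set.ssubset_iff_subset_ne.2 ⟨ht's, hne⟩) hdept'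
  refine ⟨v', c', hc', ?_⟩
  apply Set.ext
  intro e
  constructor
  · exact fun he => hsub e he
  · rintro ⟨a, ha, rfl⟩
    rw [← ht'eq] at ha
    exact ha.2



end Stmt13

end

/-- If two ordered graphs `G` and `H` on `n` vertices, with edges enumerated by
`eG, eH : Fin m → Fin n × Fin n`, have equal 1-dimensional measurement varieties
(Zariski closures of the images of the squared-length measurement maps in `ℂ^m`),
then the induced edge bijection is a cycle isomorphism: a set of edge indices
corresponds to a simple cycle of `G` iff it corresponds to a simple cycle of `H`. -/
theorem stmt13 (n m : ℕ) (G H : SimpleGraph (Fin n))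
    (eG eH : Fin m → Fin n × Fin n)
    (hGadj : ∀ a, G.Adj (eG a).1 (eG a).2)
    (hHadj : ∀ a, H.Adj (eH a).1 (eH a).2)
    (hGinj : Function.Injective (fun a => s((eG a).1, (eG a).2)))
    (hHinj : Function.Injective (fun a => s((eH a).1, (eH a).2)))
    (hGsurj : ∀ e ∈ G.edgeSet, ∃ a, s((eG a).1, (eG a).2) = e)
    (hHsurj : ∀ e ∈ H.edgeSet, ∃ a, s((eH a).1, (eH a).2) = e)
    (hMeq :
      MvPolynomial.zeroLocus ℂ (MvPolynomial.vanishingIdeal ℂ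
        (Set.range (fun p : Fin n → ℂ => fun a : Fin m => (p (eG a).1 - p (eG a).2) ^ 2)))
      = MvPolynomial.zeroLocus ℂ (MvPolynomial.vanishingIdeal ℂ
        (Set.range (fun p : Fin n → ℂ => fun a : Fin m => (p (eH a).1 - p (eH a).2) ^ 2)))) :
    ∀ s : Set (Fin m),
      IsCycleSet G ((fun a => s((eG a).1, (eG a).2)) '' s) ↔
      IsCycleSet H ((fun a => s((eH a).1, (eH a).2)) '' s) := by
  intro s
  have hI : MvPolynomial.vanishingIdeal ℂ
      (Set.range (fun p : Fin n → ℂ => fun a : Fin m => (p (eG a).1 - p (eG a).2) ^ 2))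
      = MvPolynomial.vanishingIdeal ℂ
      (Set.range (fun p : Fin n → ℂ => fun a : Fin m => (p (eH a).1 - p (eH a).2) ^ 2)) := by
    have h := congrArg (MvPolynomial.vanishingIdeal ℂ) hMeq
    rwa [Stmt13.vi_zl_vi, Stmt13.vi_zl_vi] at h
  constructor
  · exact Stmt13.key_dir G H eG eH hGadj hHadj hGinj hHinj hI s
  · exact Stmt13.key_dir H G eH eG hHadj hGadj hHinj hGinj hI.symm s
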